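/- For any subspaces U, V ⊆ E one has ‖P_U − P_V‖ ≤ δ(U,V) + δ(V,U) ≤ 2‖P_U − P_V‖. -/

import Mathlib

open Module Submodule

noncomputable section

variable {E : Type*} [NormedAddCommGroup E] [InnerProductSpace ℝ E] [FiniteDimensional ℝ E]

/-- The orthogonal projection onto a subspace `U`, viewed as a continuous linear
endomorphism of `E`. -/
noncomputable def projCLM (U : Submodule ℝ E) : E →L[ℝ] E :=
  U.subtypeL.comp (orthogonalProjection U)

/-- The gap `δ(U,V) := ‖P_U - P_V ∘ P_U‖` between two subspaces. -/
noncomputable def gap (U V : Submodule ℝ E) : ℝ :=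
  ‖projCLM U - (projCLM V).comp (projCLM U)‖

lemma projCLM_isSelfAdjoint (U : Submodule ℝ E) : IsSelfAdjoint (projCLM U) :=
  isSelfAdjoint_starProjection U

lemma projCLM_idem (U : Submodule ℝ E) : projCLM U * projCLM U = projCLM U := by
  ext x
  simp [projCLM, orthogonalProjection_mem_subspace_eq_self]
  exact congrArg (fun f => f x) U.isIdempotentElem_starProjection

lemma norm_projCLM_le (U : Submodule ℝ E) : ‖projCLM U‖ ≤ 1 := by
  refine ContinuousLinearMap.opNorm_le_bound _ zero_le_one fun x => ?_
  rw [one_mul]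
  have := (orthogonalProjection U).le_opNorm x
  calc ‖projCLM U x‖ = ‖orthogonalProjection U x‖ := by simp [projCLM]
    _ ≤ ‖orthogonalProjection U‖ * ‖x‖ := this
    _ ≤ 1 * ‖x‖ := by
        gcongr
        exact Submodule.orthogonalProjectionOnto_norm_le U
    _ = ‖x‖ := one_mul _

lemma norm_one_sub_projCLM_le (U : Submodule ℝ E) : ‖1 - projCLM U‖ ≤ 1 := by
  have h : (1 : E →L[ℝ] E) - projCLM U = projCLM Uᗮ := by
    have := id_eq_sum_starProjection_self_orthogonalComplement (𝕜 := ℝ) (K := U)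
    rw [sub_eq_iff_eq_add]
    calc (1 : E →L[ℝ] E) = ContinuousLinearMap.id ℝ E := rfl
      _ = _ := this
      _ = projCLM Uᗮ + projCLM U := by rw [add_comm]; rfl
  rw [h]
  exact norm_projCLM_le _

/-- `‖P_U − P_V‖ ≤ δ(U,V) + δ(V,U) ≤ 2 ‖P_U − P_V‖`. -/
theorem norm_sub_le_gap_add_gap (U V : Submodule ℝ E) :
    ‖projCLM U - projCLM V‖ ≤ gap U V + gap V U ∧
      gap U V + gap V U ≤ 2 * ‖projCLM U - projCLM V‖ := by
  set P := projCLM U with hP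
  set Q := projCLM V with hQ
  have hPsa : star P = P := (projCLM_isSelfAdjoint U).star_eq
  have hQsa : star Q = Q := (projCLM_isSelfAdjoint V).star_eq
  have hgapUV : gap U V = ‖P - Q * P‖ := rfl
  have hgapVU : gap V U = ‖Q - P * Q‖ := rfl
  constructor
  · have hsplit : P - Q = (P - Q * P) + (Q * P - Q) := by noncomm_ring
    have hstar : ‖Q * P - Q‖ = ‖Q - P * Q‖ := by
      rw [← norm_star (Q * P - Q), star_sub, star_mul, hPsa, hQsa, ← norm_neg, neg_sub]
    calc ‖P - Q‖ = ‖(P - Q * P) + (Q * P - Q)‖ := by rw [← hsplit]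
      _ ≤ ‖P - Q * P‖ + ‖Q * P - Q‖ := norm_add_le _ _
      _ = gap U V + gap V U := by rw [hgapUV, hgapVU, hstar]
  · have h1 : gap U V ≤ ‖P - Q‖ := by
      have hfac : P - Q * P = (1 - Q) * (P - Q) := by
        have := projCLM_idem V
        rw [← hQ] at this
        noncomm_ring [this]
      rw [hgapUV, hfac]
      calc ‖(1 - Q) * (P - Q)‖ ≤ ‖(1 - Q)‖ * ‖P - Q‖ := norm_mul_le _ _
        _ ≤ 1 * ‖P - Q‖ := by gcongr; exact norm_one_sub_projCLM_le V
        _ = ‖P - Q‖ := one_mul _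
    have h2 : gap V U ≤ ‖P - Q‖ := by
      have hfac : Q - P * Q = (1 - P) * (Q - P) := by
        have := projCLM_idem U
        rw [← hP] at this
        noncomm_ring [this]
      rw [hgapVU, hfac]
      calc ‖(1 - P) * (Q - P)‖ ≤ ‖(1 - P)‖ * ‖Q - P‖ := norm_mul_le _ _
        _ ≤ 1 * ‖Q - P‖ := by gcongr; exact norm_one_sub_projCLM_le U
        _ = ‖P - Q‖ := by rw [one_mul, norm_sub_rev]
    linarith
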